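/- The number of permutations of {1,...,n} with no adjacent cycle of any of the lengths q_1,...,q_m equals Σ (-1)^{Σ_j t_j} * (n - Σ_j (q_j-1) t_j)! / Π_j t_j!, where the sum runs over all m-tuples (t_1,...,t_m) of nonnegative integers with Σ_j q_j t_j ≤ n. -/

import Mathlib

open Finset

/-- `a` with `a+1`, ..., `a+q-1` (0-indexed) form an adjacent `q`-cycle of `π`. -/
def isAdjCycle (q : ℕ) {n : ℕ} (π : Equiv.Perm (Fin n)) (a : ℕ) : Prop :=
  a + q ≤ n ∧ ∀ i : Fin n, a ≤ i.val → i.val < a + q →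
    (π i).val = if i.val = a + q - 1 then a else i.val + 1

instance (q n : ℕ) (π : Equiv.Perm (Fin n)) (a : ℕ) : Decidable (isAdjCycle q π a) := by
  unfold isAdjCycle; infer_instance

/-- The number of adjacent `q`-cycles of a permutation of `{1,...,n}`. -/
def adjCycleCount (q : ℕ) {n : ℕ} (π : Equiv.Perm (Fin n)) : ℕ :=
  ((Finset.range n).filter (isAdjCycle q π)).card

/-- `numAqC q n k` = number of permutations of `{1,...,n}` with exactly `k` adjacent `q`-cycles. -/
def numAqC (q n k : ℕ) : ℕ :=
  (Finset.univ.filter (fun π : Equiv.Perm (Fin n) => adjCycleCount q π = k)).card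


/-- number of permutations of `{1,...,n}` with exactly `k j` adjacent `Q j`-cycles for each `j`. -/
def numMulti {m : ℕ} (Q : Fin m → ℕ) (n : ℕ) (k : Fin m → ℕ) : ℕ :=
  (Finset.univ.filter
    (fun π : Equiv.Perm (Fin n) => ∀ j, adjCycleCount (Q j) π = k j)).card




section Aux

variable {n : ℕ}

/-- The set of positions in the interval `[a, a+q)` as a finset of `Fin n`. -/
def intervalF (n a q : ℕ) : Finset (Fin n) :=
  Finset.univ.filter (fun i => a ≤ i.val ∧ i.val < a + q)

lemma mem_intervalF {a q : ℕ} {i : Fin n} :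
    i ∈ intervalF n a q ↔ a ≤ i.val ∧ i.val < a + q := by
  simp [intervalF]

lemma card_intervalF {a q : ℕ} (h : a + q ≤ n) : (intervalF n a q).card = q := by
  classical
  have : intervalF n a q = Finset.attachFin (Finset.Ico a (a+q)) (fun x hx => by simp at hx; omega) := by
    ext i; simp [intervalF, Finset.mem_attachFin]
  rw [this, Finset.card_attachFin, Nat.card_Ico]; omega

/-- The adjacent cycle as a function. -/
def cycFun (n a q : ℕ) (hq : 1 ≤ q) (hn : a + q ≤ n) (i : Fin n) : Fin n :=
  if h : a ≤ i.val ∧ i.val < a + q then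
    (if h2 : i.val = a + q - 1 then ⟨a, by omega⟩ else ⟨i.val + 1, by omega⟩)
  else i

lemma cycFun_inj (n a q : ℕ) (hq : 1 ≤ q) (hn : a + q ≤ n) :
    Function.Injective (cycFun n a q hq hn) := by
  intro i j hij
  have hi := i.isLt
  have hj := j.isLt
  apply Fin.ext
  unfold cycFun at hij
  split_ifs at hij <;> simp_all [Fin.ext_iff] <;> omega

/-- The adjacent cycle as a permutation. -/
noncomputable def cycPerm (n a q : ℕ) (hq : 1 ≤ q) (hn : a + q ≤ n) : Equiv.Perm (Fin n) :=
  Equiv.ofBijective _ (Finite.injective_iff_bijective.mp (cycFun_inj n a q hq hn))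

lemma cycPerm_apply (n a q : ℕ) (hq : 1 ≤ q) (hn : a + q ≤ n) (i : Fin n) :
    cycPerm n a q hq hn i = cycFun n a q hq hn i := rfl

lemma cycPerm_apply_of_not_mem (n a q : ℕ) (hq : 1 ≤ q) (hn : a + q ≤ n) (i : Fin n)
    (h : i ∉ intervalF n a q) : cycPerm n a q hq hn i = i := by
  rw [mem_intervalF] at h
  rw [cycPerm_apply, cycFun]
  rw [dif_neg h]

lemma cycPerm_mem (n a q : ℕ) (hq : 1 ≤ q) (hn : a + q ≤ n) (i : Fin n)
    (h : i ∈ intervalF n a q) : cycPerm n a q hq hn i ∈ intervalF n a q := by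
  rw [mem_intervalF] at h ⊢
  rw [cycPerm_apply, cycFun, dif_pos h]
  split_ifs <;> simp <;> omega

lemma cycPerm_inv_apply_of_not_mem (n a q : ℕ) (hq : 1 ≤ q) (hn : a + q ≤ n) (i : Fin n)
    (h : i ∉ intervalF n a q) : (cycPerm n a q hq hn)⁻¹ i = i := by
  have := cycPerm_apply_of_not_mem n a q hq hn i h
  conv_lhs => rw [← this]
  simp

lemma cycPerm_inv_mem (n a q : ℕ) (hq : 1 ≤ q) (hn : a + q ≤ n) (i : Fin n)
    (h : i ∈ intervalF n a q) : (cycPerm n a q hq hn)⁻¹ i ∈ intervalF n a q := by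
  by_contra hc
  have h2 := cycPerm_apply_of_not_mem n a q hq hn _ hc
  rw [show (cycPerm n a q hq hn) ((cycPerm n a q hq hn)⁻¹ i) = i from Equiv.apply_symm_apply _ _] at h2
  rw [← h2] at hc
  exact hc h

/-- `isAdjCycle` in terms of `cycPerm`. -/
lemma isAdjCycle_iff (q : ℕ) (π : Equiv.Perm (Fin n)) (a : ℕ) (hq : 1 ≤ q) (hn : a + q ≤ n)
    {isAdjCycle : Prop}
    (hdef : isAdjCycle ↔ (a + q ≤ n ∧ ∀ i : Fin n, a ≤ i.val → i.val < a + q →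
      (π i).val = if i.val = a + q - 1 then a else i.val + 1)) :
    isAdjCycle ↔ ∀ i ∈ intervalF n a q, π i = cycPerm n a q hq hn i := by
  rw [hdef]
  constructor
  · rintro ⟨-, h⟩ i hi
    rw [mem_intervalF] at hi
    have := h i hi.1 hi.2
    apply Fin.ext
    rw [this, cycPerm_apply, cycFun, dif_pos hi]
    split_ifs with h1 <;> simp
  · intro h
    refine ⟨hn, fun i h1 h2 => ?_⟩
    have := h i (mem_intervalF.mpr ⟨h1, h2⟩)
    rw [this, cycPerm_apply, cycFun, dif_pos ⟨h1, h2⟩]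
    split_ifs with h3 <;> simp

/-- counting permutations fixing a finset pointwise. -/
lemma card_fixing (F : Finset (Fin n)) :
    (Finset.univ.filter fun π : Equiv.Perm (Fin n) => ∀ i ∈ F, π i = i).card
      = (n - F.card).factorial := by
  classical
  rw [← Fintype.card_subtype]
  have e1 : {π : Equiv.Perm (Fin n) // ∀ i ∈ F, π i = i}
      ≃ {π : Equiv.Perm (Fin n) // ∀ i, ¬ (i ∉ F) → π i = i} :=
    Equiv.subtypeEquivRight (by intro π; constructor <;> intro h i hi <;> exact h i (by tauto))
  rw [Fintype.card_congr e1]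
  rw [Fintype.card_congr (Equiv.Perm.subtypeEquivSubtypePerm (fun i : Fin n => i ∉ F)).symm]
  rw [Fintype.card_perm]
  congr 1
  rw [Fintype.card_subtype]
  rw [Finset.filter_not]
  rw [Finset.card_sdiff_of_subset (by simp [Finset.subset_univ])]
  simp

end Aux
section Count

lemma isAdjCycle_iff' {n q a : ℕ} (π : Equiv.Perm (Fin n)) (hq : 1 ≤ q) (hn : a + q ≤ n) :
    isAdjCycle q π a ↔ ∀ i ∈ intervalF n a q, π i = cycPerm n a q hq hn i :=
  isAdjCycle_iff q π a hq hn Iff.rfl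

lemma isAdjCycle_congr {n q' a' : ℕ} {π π' : Equiv.Perm (Fin n)}
    (h : ∀ i : Fin n, a' ≤ i.val → i.val < a' + q' → π' i = π i) :
    isAdjCycle q' π' a' ↔ isAdjCycle q' π a' := by
  unfold isAdjCycle
  constructor <;> rintro ⟨h1, h2⟩ <;> refine ⟨h1, fun i hi hi2 => ?_⟩
  · rw [← h i hi hi2]; exact h2 i hi hi2
  · rw [h i hi hi2]; exact h2 i hi hi2

lemma adj_no_overlap {n : ℕ} {π : Equiv.Perm (Fin n)} {q q' a a' : ℕ}
    (hq : 1 ≤ q) (hq' : 1 ≤ q') (hne : q ≠ q' ∨ a ≠ a')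
    (h1 : isAdjCycle q π a) (h2 : isAdjCycle q' π a') :
    a + q ≤ a' ∨ a' + q' ≤ a := by
  obtain ⟨hn1, H1⟩ := h1
  obtain ⟨hn2, H2⟩ := h2
  by_contra hc
  push_neg at hc
  obtain ⟨c1, c2⟩ := hc
  rcases le_or_gt (a + q) (a' + q') with hle | hlt
  · have hi : a + q - 1 < n := by omega
    set i : Fin n := ⟨a + q - 1, hi⟩ with hidef
    have hiv : (i : ℕ) = a + q - 1 := rfl
    have e1 := H1 i (by omega) (by omega)
    have e2 := H2 i (by omega) (by omega)
    split_ifs at e1 e2 <;> omega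
  · have hi : a' + q' - 1 < n := by omega
    set i : Fin n := ⟨a' + q' - 1, hi⟩ with hidef
    have hiv : (i : ℕ) = a' + q' - 1 := rfl
    have e1 := H1 i (by omega) (by omega)
    have e2 := H2 i (by omega) (by omega)
    split_ifs at e1 e2 <;> omega

lemma card_constrained {m : ℕ} (Q : Fin m → ℕ) (hQ1 : ∀ j, 1 ≤ Q j) (n : ℕ)
    (S : Finset (Fin m × ℕ)) (F : Finset (Fin n))
    (hval : ∀ p ∈ S, p.2 + Q p.1 ≤ n)
    (hdisj : ∀ p ∈ S, ∀ p' ∈ S, p ≠ p' → p.2 + Q p.1 ≤ p'.2 ∨ p'.2 + Q p'.1 ≤ p.2)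
    (hF : ∀ p ∈ S, ∀ i ∈ F, ¬(p.2 ≤ i.val ∧ i.val < p.2 + Q p.1)) :
    (Finset.univ.filter fun π : Equiv.Perm (Fin n) =>
        (∀ p ∈ S, isAdjCycle (Q p.1) π p.2) ∧ ∀ i ∈ F, π i = i).card
      = (n - (F.card + ∑ p ∈ S, Q p.1)).factorial := by
  classical
  induction S using Finset.induction generalizing F with
  | empty =>
    simp only [Finset.notMem_empty, false_implies, implies_true, true_and, Finset.sum_empty]
    rw [card_fixing]
    congr 1 <;> omega
  | @insert p S' hp IH =>
    have hq := hQ1 p.1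
    have hnq : p.2 + Q p.1 ≤ n := hval p (Finset.mem_insert_self p S')
    have hIdisj : ∀ p' ∈ S', ∀ i : Fin n, p'.2 ≤ i.val → i.val < p'.2 + Q p'.1 →
        i ∉ intervalF n p.2 (Q p.1) := by
      intro p' hp' i h1 h2
      have hd := hdisj p (Finset.mem_insert_self _ _) p' (Finset.mem_insert_of_mem hp')
        (by rintro rfl; exact hp hp')
      rw [mem_intervalF]; omega
    have hFI : ∀ i ∈ F, i ∉ intervalF n p.2 (Q p.1) := fun i hi => by
      have := hF p (Finset.mem_insert_self _ _) i hi; rw [mem_intervalF]; exact this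
    have key : (Finset.univ.filter fun π : Equiv.Perm (Fin n) =>
          (∀ p' ∈ insert p S', isAdjCycle (Q p'.1) π p'.2) ∧ ∀ i ∈ F, π i = i).card
        = (Finset.univ.filter fun π : Equiv.Perm (Fin n) =>
          (∀ p' ∈ S', isAdjCycle (Q p'.1) π p'.2) ∧
            ∀ i ∈ F ∪ intervalF n p.2 (Q p.1), π i = i).card := by
      apply Finset.card_bij' (fun π _ => π * (cycPerm n p.2 (Q p.1) hq hnq)⁻¹)
        (fun π _ => π * cycPerm n p.2 (Q p.1) hq hnq)
      · intro π hπ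
        rw [Finset.mem_filter] at hπ ⊢
        obtain ⟨-, hcyc, hfix⟩ := hπ
        refine ⟨Finset.mem_univ _, ?_, ?_⟩
        · intro p' hp'
          rw [isAdjCycle_congr (π := π)]
          · exact hcyc p' (Finset.mem_insert_of_mem hp')
          · intro i h1 h2
            rw [Equiv.Perm.mul_apply,
              cycPerm_inv_apply_of_not_mem n _ _ hq hnq i (hIdisj p' hp' i h1 h2)]
        · intro i hi
          rcases Finset.mem_union.mp hi with hi | hi
          · rw [Equiv.Perm.mul_apply, cycPerm_inv_apply_of_not_mem n _ _ hq hnq i (hFI i hi)]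
            exact hfix i hi
          · rw [Equiv.Perm.mul_apply]
            have hmem := cycPerm_inv_mem n _ _ hq hnq i hi
            have h3 := (isAdjCycle_iff' π hq hnq).mp
              (hcyc p (Finset.mem_insert_self _ _)) _ hmem
            rw [h3]
            exact Equiv.apply_symm_apply _ _
      · intro π hπ
        rw [Finset.mem_filter] at hπ ⊢
        obtain ⟨-, hcyc, hfix⟩ := hπ
        refine ⟨Finset.mem_univ _, ?_, ?_⟩
        · intro p' hp'
          rcases Finset.mem_insert.mp hp' with heq | hp'
          · subst heq
            rw [isAdjCycle_iff' _ hq hnq]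
            intro i hi
            rw [Equiv.Perm.mul_apply]
            exact hfix _ (Finset.mem_union_right _ (cycPerm_mem n _ _ hq hnq i hi))
          · rw [isAdjCycle_congr (π := π)]
            · exact hcyc p' hp'
            · intro i h1 h2
              rw [Equiv.Perm.mul_apply,
                cycPerm_apply_of_not_mem n _ _ hq hnq i (hIdisj p' hp' i h1 h2)]
        · intro i hi
          rw [Equiv.Perm.mul_apply, cycPerm_apply_of_not_mem n _ _ hq hnq i (hFI i hi)]
          exact hfix i (Finset.mem_union_left _ hi)
      · intro π hπ
        exact inv_mul_cancel_right π _
      · intro π hπ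
        exact mul_inv_cancel_right π _
    rw [key, IH (F ∪ intervalF n p.2 (Q p.1))
      (fun p' h => hval p' (Finset.mem_insert_of_mem h))
      (fun p' h p'' h' => hdisj p' (Finset.mem_insert_of_mem h) p'' (Finset.mem_insert_of_mem h'))
      ?_]
    · rw [Finset.card_union_of_disjoint (Finset.disjoint_left.mpr hFI),
        card_intervalF hnq, Finset.sum_insert hp]
      congr 1
      omega
    · intro p' hp' i hi
      rcases Finset.mem_union.mp hi with hi | hi
      · exact hF p' (Finset.mem_insert_of_mem hp') i hi
      · intro hcon
        exact hIdisj p' hp' i hcon.1 hcon.2 hi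

end Count
section Glue

variable {m : ℕ}

/-- placements: sets of pairwise-disjoint labelled intervals with multiplicities `t`. -/
def placeSets (Q : Fin m → ℕ) (n : ℕ) (t : Fin m → ℕ) : Finset (Finset (Fin m × ℕ)) :=
  (((Finset.univ : Finset (Fin m)) ×ˢ Finset.range n).powerset).filter
    (fun S => ((∀ p ∈ S, p.2 + Q p.1 ≤ n) ∧
      ∀ p ∈ S, ∀ p' ∈ S, p ≠ p' → p.2 + Q p.1 ≤ p'.2 ∨ p'.2 + Q p'.1 ≤ p.2) ∧
      (fun j => (S.filter (fun p => p.1 = j)).card) = t)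

lemma cnt_eq_zero {n : ℕ} (Q : Fin m → ℕ) (hQ : Function.Injective Q) (hQ1 : ∀ j, 1 ≤ Q j)
    (S : Finset (Fin m × ℕ))
    (hbad : ¬ ((∀ p ∈ S, p.2 + Q p.1 ≤ n) ∧
      ∀ p ∈ S, ∀ p' ∈ S, p ≠ p' → p.2 + Q p.1 ≤ p'.2 ∨ p'.2 + Q p'.1 ≤ p.2)) :
    (Finset.univ.filter fun π : Equiv.Perm (Fin n) =>
        ∀ p ∈ S, isAdjCycle (Q p.1) π p.2).card = 0 := by
  rw [Finset.card_eq_zero, Finset.filter_eq_empty_iff]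
  intro π _
  intro hπ
  apply hbad
  constructor
  · exact fun p hp => (hπ p hp).1
  · intro p hp p' hp' hne
    apply adj_no_overlap (hQ1 p.1) (hQ1 p'.1) _ (hπ p hp) (hπ p' hp')
    by_contra hco
    push_neg at hco
    apply hne
    obtain ⟨h1, h2⟩ := hco
    have := hQ h1
    exact Prod.ext this h2

lemma sum_Q_le {n : ℕ} (Q : Fin m → ℕ) (hQ1 : ∀ j, 1 ≤ Q j) (S : Finset (Fin m × ℕ))
    (hval : ∀ p ∈ S, p.2 + Q p.1 ≤ n)
    (hdisj : ∀ p ∈ S, ∀ p' ∈ S, p ≠ p' → p.2 + Q p.1 ≤ p'.2 ∨ p'.2 + Q p'.1 ≤ p.2) :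
    ∑ p ∈ S, Q p.1 ≤ n := by
  classical
  have h1 : ∑ p ∈ S, Q p.1 = ∑ p ∈ S, (intervalF n p.2 (Q p.1)).card :=
    Finset.sum_congr rfl fun p hp => (card_intervalF (hval p hp)).symm
  rw [h1]
  rw [← Finset.card_biUnion]
  · calc (S.biUnion fun p => intervalF n p.2 (Q p.1)).card
        ≤ (Finset.univ : Finset (Fin n)).card := Finset.card_le_card (Finset.subset_univ _)
      _ = n := by simp
  · intro p hp p' hp' hne
    rw [Function.onFun, Finset.disjoint_left]
    intro i hi hi'
    rw [mem_intervalF] at hi hi'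
    have := hdisj p hp p' hp' hne
    omega

lemma typeOf_sum_mul (Q : Fin m → ℕ) (S : Finset (Fin m × ℕ)) (g : Fin m → ℕ) :
    ∑ j, g j * (S.filter (fun p => p.1 = j)).card = ∑ p ∈ S, g p.1 := by
  classical
  rw [← Finset.sum_fiberwise_of_maps_to (g := fun p : Fin m × ℕ => p.1)
    (fun p _ => Finset.mem_univ _) (fun p => g p.1)]
  apply Finset.sum_congr rfl
  intro j _
  exact .symm <| calc ∑ i ∈ S.filter (fun p => p.1 = j), g i.1
      = ∑ _i ∈ S.filter (fun p => p.1 = j), g j :=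
        Finset.sum_congr rfl (fun p hp => by rw [(Finset.mem_filter.mp hp).2])
    _ = g j * (S.filter (fun p => p.1 = j)).card := by
        rw [Finset.sum_const, smul_eq_mul, mul_comm]

lemma typeOf_sum (S : Finset (Fin m × ℕ)) :
    ∑ j, (S.filter (fun p : Fin m × ℕ => p.1 = j)).card = S.card := by
  classical
  exact (Finset.card_eq_sum_card_fiberwise (fun p _ => Finset.mem_univ p.1)).symm

end Glue
section IE

variable {m : ℕ}

lemma step_IE (Q : Fin m → ℕ) (n : ℕ) :
    ((numMulti Q n fun _ => 0 : ℕ) : ℚ) =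
      ∑ S ∈ ((Finset.univ : Finset (Fin m)) ×ˢ Finset.range n).powerset,
        (-1 : ℚ) ^ S.card *
          ((Finset.univ.filter fun π : Equiv.Perm (Fin n) =>
            ∀ p ∈ S, isAdjCycle (Q p.1) π p.2).card : ℚ) := by
  classical
  set E := ((Finset.univ : Finset (Fin m)) ×ˢ Finset.range n) with hE
  have hD : ∀ π : Equiv.Perm (Fin n),
      ((∀ j, adjCycleCount (Q j) π = 0) ↔ E.filter (fun p => isAdjCycle (Q p.1) π p.2) = ∅) := by
    intro π
    rw [Finset.filter_eq_empty_iff]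
    constructor
    · intro h p hp
      have h2 := h p.1
      rw [adjCycleCount, Finset.card_eq_zero, Finset.filter_eq_empty_iff] at h2
      exact h2 (Finset.mem_product.mp hp).2
    · intro h j
      rw [adjCycleCount, Finset.card_eq_zero, Finset.filter_eq_empty_iff]
      intro a ha
      exact h (show ((j, a) : Fin m × ℕ) ∈ E from
        Finset.mem_product.mpr ⟨Finset.mem_univ _, ha⟩)
  have key : ∀ π : Equiv.Perm (Fin n),
      ((if (∀ j, adjCycleCount (Q j) π = 0) then (1:ℚ) else 0))
        = ∑ S ∈ E.powerset,
            if (∀ p ∈ S, isAdjCycle (Q p.1) π p.2) then (-1:ℚ)^S.card else 0 := by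
    intro π
    set D := E.filter (fun p => isAdjCycle (Q p.1) π p.2) with hDdef
    have h1 : ∑ S ∈ E.powerset,
          (if (∀ p ∈ S, isAdjCycle (Q p.1) π p.2) then (-1:ℚ)^S.card else 0)
        = ∑ S ∈ E.powerset, (if S ⊆ D then (-1:ℚ)^S.card else 0) := by
      apply Finset.sum_congr rfl
      intro S hS
      rw [Finset.mem_powerset] at hS
      congr 1
      apply propext
      constructor
      · intro h p hp
        rw [hDdef, Finset.mem_filter]
        exact ⟨hS hp, h p hp⟩
      · intro h p hp
        exact (Finset.mem_filter.mp (h hp)).2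
    have h2 : E.powerset.filter (fun S => S ⊆ D) = D.powerset := by
      ext S
      simp only [Finset.mem_filter, Finset.mem_powerset]
      exact ⟨fun h => h.2, fun h => ⟨h.trans (Finset.filter_subset _ _), h⟩⟩
    have h3 : ∑ S ∈ D.powerset, ((-1:ℚ)^S.card) = if D = ∅ then 1 else 0 := by
      have h4 := Finset.sum_powerset_neg_one_pow_card (x := D)
      have h5 := congrArg (fun z : ℤ => (z : ℚ)) h4
      push_cast at h5
      rw [h5]
    rw [h1, ← Finset.sum_filter, h2, h3]
    exact if_congr (hD π) rfl rfl
  rw [numMulti, Finset.card_filter]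
  push_cast
  rw [Finset.sum_congr rfl (fun π _ => key π), Finset.sum_comm]
  apply Finset.sum_congr rfl
  intro S _
  rw [← Finset.sum_filter, Finset.sum_const, nsmul_eq_mul, mul_comm]

end IE
section Place

variable {m : ℕ}

lemma mem_placeSets {Q : Fin m → ℕ} {n : ℕ} {t : Fin m → ℕ} {S : Finset (Fin m × ℕ)} :
    S ∈ placeSets Q n t ↔
      (∀ p ∈ S, p.2 < n) ∧
      ((∀ p ∈ S, p.2 + Q p.1 ≤ n) ∧
        ∀ p ∈ S, ∀ p' ∈ S, p ≠ p' → p.2 + Q p.1 ≤ p'.2 ∨ p'.2 + Q p'.1 ≤ p.2) ∧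
      (fun j => (S.filter (fun p => p.1 = j)).card) = t := by
  rw [placeSets, Finset.mem_filter, Finset.mem_powerset]
  constructor
  · rintro ⟨h1, h2⟩
    exact ⟨fun p hp => Finset.mem_range.mp (Finset.mem_product.mp (h1 hp)).2, h2⟩
  · rintro ⟨h1, h2⟩
    exact ⟨fun p hp => Finset.mem_product.mpr
      ⟨Finset.mem_univ _, Finset.mem_range.mpr (h1 p hp)⟩, h2⟩

lemma placeSets_empty {Q : Fin m → ℕ} (hQ1 : ∀ j, 1 ≤ Q j) {n : ℕ} {t : Fin m → ℕ}
    (h : ¬ (∑ j, Q j * t j ≤ n)) : placeSets Q n t = ∅ := by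
  rw [Finset.eq_empty_iff_forall_notMem]
  intro S hS
  obtain ⟨h1, ⟨h2, h3⟩, h4⟩ := mem_placeSets.mp hS
  apply h
  rw [← h4]
  rw [typeOf_sum_mul Q S Q]
  exact sum_Q_le Q hQ1 S h2 h3

lemma placeSets_zero {Q : Fin m → ℕ} {n : ℕ} : placeSets Q n (fun _ => 0) = {∅} := by
  ext S
  rw [Finset.mem_singleton, mem_placeSets]
  constructor
  · rintro ⟨h1, h2, h4⟩
    by_contra hne
    obtain ⟨p, hp⟩ := Finset.nonempty_iff_ne_empty.mpr hne
    have hmem : p ∈ S.filter (fun p' => p'.1 = p.1) := Finset.mem_filter.mpr ⟨hp, rfl⟩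
    have hc := Finset.card_pos.mpr ⟨_, hmem⟩
    have := congrFun h4 p.1
    omega
  · rintro rfl
    refine ⟨by simp, ⟨by simp, by simp⟩, funext fun j => by simp⟩

lemma filter_le_placeSets {Q : Fin m → ℕ} (hQ1 : ∀ j, 1 ≤ Q j) (n : ℕ) (t : Fin m → ℕ) :
    (placeSets Q (n+1) t).filter (fun S => ∀ p ∈ S, p.2 + Q p.1 ≤ n) = placeSets Q n t := by
  ext S
  rw [Finset.mem_filter, mem_placeSets, mem_placeSets]
  constructor
  · rintro ⟨⟨h1, ⟨h2, h3⟩, h4⟩, h5⟩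
    exact ⟨fun p hp => by have := hQ1 p.1; have := h5 p hp; omega, ⟨h5, h3⟩, h4⟩
  · rintro ⟨h1, ⟨h2, h3⟩, h4⟩
    exact ⟨⟨fun p hp => by have := h1 p hp; omega,
      ⟨fun p hp => by have := h2 p hp; omega, h3⟩, h4⟩, h2⟩

lemma filter_gt_eq_biUnion {Q : Fin m → ℕ} (n : ℕ) (t : Fin m → ℕ) :
    (placeSets Q (n+1) t).filter (fun S => ¬ ∀ p ∈ S, p.2 + Q p.1 ≤ n)
      = Finset.univ.biUnion
          (fun j => (placeSets Q (n+1) t).filter (fun S => (j, n + 1 - Q j) ∈ S)) := by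
  ext S
  simp only [Finset.mem_filter, Finset.mem_biUnion, Finset.mem_univ, true_and]
  constructor
  · rintro ⟨hS, hbad⟩
    push_neg at hbad
    obtain ⟨p, hp, hpn⟩ := hbad
    refine ⟨p.1, hS, ?_⟩
    have hval := (mem_placeSets.mp hS).2.1.1 p hp
    have hp2 : p.2 = n + 1 - Q p.1 := by omega
    have hpe : p = (p.1, n+1-Q p.1) := Prod.ext rfl hp2
    rwa [← hpe]
  · rintro ⟨j, hS, hj⟩
    refine ⟨hS, ?_⟩
    intro hall
    have h1 := hall _ hj
    have h2 := (mem_placeSets.mp hS).2.1.1 _ hj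
    dsimp only at h1 h2
    omega

lemma branch_empty_of_tzero {Q : Fin m → ℕ} {n : ℕ} {t : Fin m → ℕ} (j : Fin m)
    (ht : t j = 0) :
    (placeSets Q (n+1) t).filter (fun S => (j, n + 1 - Q j) ∈ S) = ∅ := by
  rw [Finset.filter_eq_empty_iff]
  intro S hS hj
  have h4 := (mem_placeSets.mp hS).2.2
  have hmem : ((j, n+1-Q j) : Fin m × ℕ) ∈ S.filter (fun p => p.1 = j) :=
    Finset.mem_filter.mpr ⟨hj, rfl⟩
  have hc := Finset.card_pos.mpr ⟨_, hmem⟩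
  have := congrFun h4 j
  omega

lemma branch_card {Q : Fin m → ℕ} (hQ1 : ∀ j, 1 ≤ Q j) {n : ℕ} {t : Fin m → ℕ} (j : Fin m)
    (hQn : Q j ≤ n + 1) (htj : 1 ≤ t j) :
    ((placeSets Q (n+1) t).filter (fun S => (j, n + 1 - Q j) ∈ S)).card
      = (placeSets Q (n + 1 - Q j) (Function.update t j (t j - 1))).card := by
  classical
  refine Finset.card_bij' (fun S _ => S.erase (j, n+1-Q j)) (fun S _ => insert (j, n+1-Q j) S)
    ?hi ?hj ?left ?right
  case hi =>
    -- forward membership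
    intro S hS
    obtain ⟨hS, hj⟩ := Finset.mem_filter.mp hS
    obtain ⟨h1, ⟨h2, h3⟩, h4⟩ := mem_placeSets.mp hS
    have hdis : ∀ p ∈ S, p ≠ ((j, n+1-Q j) : Fin m × ℕ) → p.2 + Q p.1 ≤ n + 1 - Q j := by
      intro p hp hne
      have ha := h3 p hp _ hj hne
      have hb := h1 p hp
      dsimp only at ha
      omega
    refine mem_placeSets.mpr ⟨?_, ⟨?_, ?_⟩, ?_⟩
    · intro p hp
      obtain ⟨hne, hp⟩ := Finset.mem_erase.mp hp
      have := hdis p hp hne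
      have := hQ1 p.1
      omega
    · intro p hp
      obtain ⟨hne, hp⟩ := Finset.mem_erase.mp hp
      exact hdis p hp hne
    · intro p hp p' hp' hne
      exact h3 p (Finset.mem_of_mem_erase hp) p' (Finset.mem_of_mem_erase hp') hne
    · funext j'
      rw [Finset.filter_erase]
      have h5 : (S.filter (fun p => p.1 = j')).card = t j' := congrFun h4 j'
      by_cases hj' : j' = j
      · subst hj'
        have hmemf : ((j', n+1-Q j') : Fin m × ℕ) ∈ S.filter (fun p => p.1 = j') :=
          Finset.mem_filter.mpr ⟨hj, rfl⟩
        rw [Finset.card_erase_of_mem hmemf, Function.update_self, h5]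
      · rw [Finset.erase_eq_of_notMem (fun hc => hj' ((Finset.mem_filter.mp hc).2).symm)]
        rw [Function.update_of_ne hj', h5]
  case hj =>
    intro S hS
    obtain ⟨h1, ⟨h2, h3⟩, h4⟩ := mem_placeSets.mp hS
    have hx : ((j, n+1-Q j) : Fin m × ℕ) ∉ S := by
      intro hc
      have hb := h1 _ hc
      dsimp only at hb
      omega
    rw [Finset.mem_filter]
    refine ⟨mem_placeSets.mpr ⟨?_, ⟨?_, ?_⟩, ?_⟩, Finset.mem_insert_self _ _⟩
    · intro p hp
      rcases Finset.mem_insert.mp hp with rfl | hp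
      · dsimp only
        have := hQ1 j
        omega
      · have := h1 p hp
        omega
    · intro p hp
      rcases Finset.mem_insert.mp hp with rfl | hp
      · dsimp only
        omega
      · have := h2 p hp
        omega
    · intro p hp p' hp' hne
      rcases Finset.mem_insert.mp hp with rfl | hp <;>
        rcases Finset.mem_insert.mp hp' with h' | hp'
      · exact absurd h'.symm hne
      · right
        have := h2 p' hp'
        dsimp only
        omega
      · subst h'
        left
        have := h2 p hp
        dsimp only
        omega
      · exact h3 p hp p' hp' hne
    · funext j'
      rw [Finset.filter_insert]
      have h5 : (S.filter (fun p => p.1 = j')).card = Function.update t j (t j - 1) j' :=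
        congrFun h4 j'
      by_cases hj' : j' = j
      · subst hj'
        rw [Function.update_self] at h5
        rw [if_pos rfl]
        rw [Finset.card_insert_of_notMem (fun hc => hx (Finset.mem_filter.mp hc).1), h5]
        omega
      · rw [Function.update_of_ne hj'] at h5
        rw [if_neg (fun hc => hj' hc.symm), h5]
  case left =>
    intro S hS
    exact Finset.insert_erase (Finset.mem_filter.mp hS).2
  case right =>
    intro S hS
    apply Finset.erase_insert
    obtain ⟨h1, -, -⟩ := mem_placeSets.mp hS
    intro hc
    have hb := h1 _ hc
    dsimp only at hb
    omega

end Place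
section Place2

variable {m : ℕ}

lemma sum_mul_update (g t : Fin m → ℕ) (j : Fin m) (htj : 1 ≤ t j) :
    (∑ j', g j' * Function.update t j (t j - 1) j') + g j = ∑ j', g j' * t j' := by
  classical
  rw [← Finset.sum_erase_add _ _ (Finset.mem_univ j),
    ← Finset.sum_erase_add _ (fun j' => g j' * t j') (Finset.mem_univ j)]
  have he : ∑ j' ∈ Finset.univ.erase j, g j' * Function.update t j (t j - 1) j'
      = ∑ j' ∈ Finset.univ.erase j, g j' * t j' :=
    Finset.sum_congr rfl fun j' hj' => by
      rw [Function.update_of_ne (Finset.mem_erase.mp hj').1]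
  rw [he, Function.update_self]
  obtain ⟨u, hu⟩ := Nat.exists_eq_add_of_le htj
  rw [hu]
  have h1 : 1 + u - 1 = u := by omega
  rw [h1]
  ring

lemma prod_fact_update (t : Fin m → ℕ) (j : Fin m) (htj : 1 ≤ t j) :
    ∏ j', (t j').factorial
      = t j * ∏ j', (Function.update t j (t j - 1) j').factorial := by
  classical
  rw [← Finset.prod_erase_mul _ _ (Finset.mem_univ j),
    ← Finset.prod_erase_mul _ (fun j' => (Function.update t j (t j - 1) j').factorial) (Finset.mem_univ j)]
  have he : ∏ j' ∈ Finset.univ.erase j, (Function.update t j (t j - 1) j').factorial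
      = ∏ j' ∈ Finset.univ.erase j, (t j').factorial :=
    Finset.prod_congr rfl fun j' hj' => by
      rw [Function.update_of_ne (Finset.mem_erase.mp hj').1]
  rw [he, Function.update_self]
  obtain ⟨u, hu⟩ := Nat.exists_eq_add_of_le htj
  rw [hu]
  have h1 : 1 + u - 1 = u := by omega
  have h2 : (1 + u).factorial = (1 + u) * u.factorial := by
    rw [Nat.add_comm 1 u, Nat.factorial_succ]
  rw [h1, h2]
  ring

lemma placeSets_card_mul {Q : Fin m → ℕ} (hQ1 : ∀ j, 1 ≤ Q j) :
    ∀ n : ℕ, ∀ t : Fin m → ℕ, ∑ j, Q j * t j ≤ n →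
      (placeSets Q n t).card
          * ((∏ j, (t j).factorial) * (n - ∑ j, Q j * t j).factorial)
        = (n - ∑ j, (Q j - 1) * t j).factorial := by
  classical
  intro n
  induction n using Nat.strong_induction_on with
  | _ n IH =>
  intro t ht
  -- basic sum facts
  have hτs : (∑ j, (Q j - 1) * t j) + (∑ j, t j) = ∑ j, Q j * t j := by
    rw [← Finset.sum_add_distrib]
    apply Finset.sum_congr rfl
    intro j _
    obtain ⟨q, hq⟩ := Nat.exists_eq_add_of_le (hQ1 j)
    rw [hq]
    have h1 : 1 + q - 1 = q := by omega
    rw [h1]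
    ring
  have hs0 : (∑ j, t j) = 0 → (∑ j, Q j * t j) = 0 := by
    intro h
    rw [Finset.sum_eq_zero_iff] at h ⊢
    intro j hj
    rw [h j hj, Nat.mul_zero]
  rcases n with _ | n
  · -- base case n = 0
    have ht0 : t = fun _ => 0 := by
      funext j
      have h := Finset.sum_eq_zero_iff.mp (Nat.le_zero.mp ht) j (Finset.mem_univ j)
      rcases Nat.mul_eq_zero.mp h with h' | h'
      · exact absurd h' (by have := hQ1 j; omega)
      · exact h'
    subst ht0
    rw [placeSets_zero]
    simp
  · -- inductive step
    have hdisjU : ∀ j ∈ (Finset.univ : Finset (Fin m)), ∀ j' ∈ (Finset.univ : Finset (Fin m)),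
        j ≠ j' → Disjoint ((placeSets Q (n+1) t).filter (fun S => (j, n + 1 - Q j) ∈ S))
          ((placeSets Q (n+1) t).filter (fun S => (j', n + 1 - Q j') ∈ S)) := by
      intro j _ j' _ hne
      rw [Finset.disjoint_left]
      intro S hS hS'
      obtain ⟨hSp, hj⟩ := Finset.mem_filter.mp hS
      obtain ⟨-, hj'⟩ := Finset.mem_filter.mp hS'
      obtain ⟨h1, ⟨h2, h3⟩, h4⟩ := mem_placeSets.mp hSp
      have hd := h3 _ hj _ hj' (by intro hc; exact hne (congrArg Prod.fst hc))
      have hv1 := h2 _ hj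
      have hv2 := h2 _ hj'
      have hq1 := hQ1 j
      have hq2 := hQ1 j'
      dsimp only at hd hv1 hv2
      omega
    have hsplit := Finset.card_filter_add_card_filter_not
      (s := placeSets Q (n+1) t) (p := fun S => ∀ p ∈ S, p.2 + Q p.1 ≤ n)
    rw [filter_le_placeSets hQ1 n t, filter_gt_eq_biUnion n t,
      Finset.card_biUnion hdisjU] at hsplit
    -- branch computation
    have hbranch : ∀ j : Fin m,
        ((placeSets Q (n+1) t).filter (fun S => (j, n + 1 - Q j) ∈ S)).card
            * ((∏ j', (t j').factorial) * (n + 1 - ∑ j', Q j' * t j').factorial)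
          = t j * (n - ∑ j', (Q j' - 1) * t j').factorial := by
      intro j
      by_cases htj : t j = 0
      · rw [branch_empty_of_tzero j htj, htj]
        simp
      · have htj1 : 1 ≤ t j := by omega
        have hQQ : Q j ≤ Q j * t j := by
          calc Q j = Q j * 1 := (mul_one _).symm
            _ ≤ Q j * t j := Nat.mul_le_mul_left _ htj1
        have hQσ : Q j ≤ ∑ j', Q j' * t j' :=
          le_trans hQQ (Finset.single_le_sum (f := fun j' => Q j' * t j')
            (fun _ _ => Nat.zero_le _) (Finset.mem_univ j))
        have hQQ2 : Q j - 1 ≤ (Q j - 1) * t j := by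
          calc Q j - 1 = (Q j - 1) * 1 := (mul_one _).symm
            _ ≤ (Q j - 1) * t j := Nat.mul_le_mul_left _ htj1
        have hτQ : Q j - 1 ≤ ∑ j', (Q j' - 1) * t j' :=
          le_trans hQQ2 (Finset.single_le_sum (f := fun j' => (Q j' - 1) * t j')
            (fun _ _ => Nat.zero_le _) (Finset.mem_univ j))
        have hsb : 1 ≤ ∑ j', t j' :=
          le_trans htj1 (Finset.single_le_sum (fun _ _ => Nat.zero_le _) (Finset.mem_univ j))
        have hQn : Q j ≤ n + 1 := le_trans hQσ ht
        rw [branch_card hQ1 j hQn htj1]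
        have hσ' : ∑ j', Q j' * Function.update t j (t j - 1) j'
            = (∑ j', Q j' * t j') - Q j := by
          have := sum_mul_update Q t j htj1
          omega
        have hτ' : ∑ j', (Q j' - 1) * Function.update t j (t j - 1) j'
            = (∑ j', (Q j' - 1) * t j') - (Q j - 1) := by
          have h10 : (∑ j', (Q j' - 1) * Function.update t j (t j - 1) j') + (Q j - 1)
              = ∑ j', (Q j' - 1) * t j' := sum_mul_update (fun j' => Q j' - 1) t j htj1
          omega
        have hle : ∑ j', Q j' * Function.update t j (t j - 1) j' ≤ n + 1 - Q j := by
          rw [hσ']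
          exact Nat.sub_le_sub_right ht (Q j)
        have hq0 := hQ1 j
        have hIH := IH (n + 1 - Q j) (by omega) (Function.update t j (t j - 1)) hle
        rw [hσ', hτ'] at hIH
        have harg1 : n + 1 - Q j - ((∑ j', Q j' * t j') - Q j)
            = n + 1 - ∑ j', Q j' * t j' := by omega
        have harg2 : n + 1 - Q j - ((∑ j', (Q j' - 1) * t j') - (Q j - 1))
            = n - ∑ j', (Q j' - 1) * t j' := by
          have hq1 := hQ1 j
          omega
        rw [harg1, harg2] at hIH
        rw [prod_fact_update t j htj1]
        rw [← hIH]
        ring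
    rw [← hsplit, add_mul, Finset.sum_mul]
    have hterm2 : (∑ j, ((placeSets Q (n+1) t).filter (fun S => (j, n + 1 - Q j) ∈ S)).card
            * ((∏ j', (t j').factorial) * (n + 1 - ∑ j', Q j' * t j').factorial))
          = (∑ j, t j) * (n - ∑ j', (Q j' - 1) * t j').factorial := by
      rw [Finset.sum_congr rfl (fun j _ => hbranch j), ← Finset.sum_mul]
    have hterm1 : (placeSets Q n t).card
            * ((∏ j, (t j).factorial) * (n + 1 - ∑ j, Q j * t j).factorial)
          = (n + 1 - ∑ j, Q j * t j) * (n - ∑ j, (Q j - 1) * t j).factorial := by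
      by_cases hσn : ∑ j, Q j * t j ≤ n
      · have hIH0 := IH n (by omega) t hσn
        have hr : n + 1 - ∑ j, Q j * t j = (n - ∑ j, Q j * t j) + 1 := by omega
        rw [hr, Nat.factorial_succ, ← hIH0]
        ring
      · rw [placeSets_empty hQ1 hσn]
        have h0 : n + 1 - ∑ j, Q j * t j = 0 := by omega
        rw [h0]
        simp
    rw [hterm1, hterm2]
    have h9 : (∑ j, t j) ≠ 0 ∨ (∑ j, Q j * t j) = 0 := by
      rcases Nat.eq_zero_or_pos (∑ j, t j) with h | h
      · exact Or.inr (hs0 h)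
      · exact Or.inl (by omega)
    have hfin : n + 1 - (∑ j, Q j * t j) + (∑ j, t j)
        = (n - ∑ j, (Q j - 1) * t j) + 1 := by omega
    calc (n + 1 - ∑ j, Q j * t j) * (n - ∑ j, (Q j - 1) * t j).factorial
          + (∑ j, t j) * (n - ∑ j', (Q j' - 1) * t j').factorial
        = ((n + 1 - ∑ j, Q j * t j) + ∑ j, t j)
            * (n - ∑ j, (Q j - 1) * t j).factorial := by ring
      _ = ((n - ∑ j, (Q j - 1) * t j) + 1) * (n - ∑ j, (Q j - 1) * t j).factorial := by
          rw [hfin]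
      _ = ((n - ∑ j, (Q j - 1) * t j) + 1).factorial := (Nat.factorial_succ _).symm
      _ = (n + 1 - ∑ j, (Q j - 1) * t j).factorial := by
          congr 1
          omega

end Place2
def compatP {m : ℕ} (Q : Fin m → ℕ) (n : ℕ) (S : Finset (Fin m × ℕ)) : Prop :=
  (∀ p ∈ S, p.2 + Q p.1 ≤ n) ∧
    ∀ p ∈ S, ∀ p' ∈ S, p ≠ p' → p.2 + Q p.1 ≤ p'.2 ∨ p'.2 + Q p'.1 ≤ p.2

instance {m : ℕ} (Q : Fin m → ℕ) (n : ℕ) : DecidablePred (compatP Q n) := by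
  unfold compatP; infer_instance

theorem stmt17 (m n : ℕ) (Q : Fin m → ℕ) (hQ : StrictMono Q) (hQ1 : ∀ j, 1 ≤ Q j)
    (hn : 1 ≤ n) :
    (numMulti Q n (fun _ => 0) : ℚ) =
      ∑ t ∈ (Fintype.piFinset fun _ : Fin m => Finset.range (n + 1)).filter
          (fun t => ∑ j, Q j * t j ≤ n),
        (-1 : ℚ) ^ (∑ j, t j) *
          ((n - ∑ j, (Q j - 1) * t j).factorial : ℚ) / ((∏ j, (t j).factorial : ℕ) : ℚ) := by
  classical
  rw [step_IE Q n]
  have hne : ∀ S ∈ ((Finset.univ : Finset (Fin m)) ×ˢ Finset.range n).powerset,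
      ((-1 : ℚ) ^ S.card *
        ((Finset.univ.filter fun π : Equiv.Perm (Fin n) =>
          ∀ p ∈ S, isAdjCycle (Q p.1) π p.2).card : ℚ)) ≠ 0 → compatP Q n S := by
    intro S _ h
    by_contra hc
    apply h
    rw [cnt_eq_zero Q hQ.injective hQ1 S (fun hcc => hc hcc)]
    simp
  rw [← Finset.sum_filter_of_ne hne]
  have hmaps : ∀ S ∈ (((Finset.univ : Finset (Fin m)) ×ˢ Finset.range n).powerset).filter (compatP Q n),
      (fun j => (S.filter (fun p => p.1 = j)).card)
        ∈ (Fintype.piFinset fun _ : Fin m => Finset.range (n + 1)).filter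
            (fun t => ∑ j, Q j * t j ≤ n) := by
    intro S hS
    obtain ⟨hS1, hSc⟩ := Finset.mem_filter.mp hS
    obtain ⟨hS2, hS3⟩ := hSc
    have hsig : ∑ j, Q j * (S.filter (fun p => p.1 = j)).card ≤ n := by
      rw [typeOf_sum_mul Q S Q]
      exact sum_Q_le Q hQ1 S hS2 hS3
    rw [Finset.mem_filter]
    refine ⟨?_, hsig⟩
    rw [Fintype.mem_piFinset]
    intro j
    rw [Finset.mem_range]
    have h1 : (S.filter (fun p => p.1 = j)).card ≤ Q j * (S.filter (fun p => p.1 = j)).card := by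
      calc (S.filter (fun p => p.1 = j)).card
          = 1 * (S.filter (fun p => p.1 = j)).card := (one_mul _).symm
        _ ≤ Q j * (S.filter (fun p => p.1 = j)).card := Nat.mul_le_mul_right _ (hQ1 j)
    have h2 : Q j * (S.filter (fun p => p.1 = j)).card
        ≤ ∑ j', Q j' * (S.filter (fun p => p.1 = j')).card :=
      Finset.single_le_sum (f := fun j' => Q j' * (S.filter (fun p => p.1 = j')).card)
        (fun _ _ => Nat.zero_le _) (Finset.mem_univ j)
    omega
  rw [← Finset.sum_fiberwise_of_maps_to hmaps]
  apply Finset.sum_congr rfl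
  intro t htT
  obtain ⟨htpi, htsig⟩ := Finset.mem_filter.mp htT
  -- fiber = placeSets
  have hfiber : ((((Finset.univ : Finset (Fin m)) ×ˢ Finset.range n).powerset).filter
        (compatP Q n)).filter (fun S => (fun j => (S.filter (fun p => p.1 = j)).card) = t)
      = placeSets Q n t := by
    ext S
    simp only [placeSets, compatP, Finset.mem_filter, Finset.mem_powerset]
    tauto
  rw [hfiber]
  -- each term in the fiber is constant
  have hterm : ∀ S ∈ placeSets Q n t,
      ((-1 : ℚ) ^ S.card *
        ((Finset.univ.filter fun π : Equiv.Perm (Fin n) =>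
          ∀ p ∈ S, isAdjCycle (Q p.1) π p.2).card : ℚ))
      = (-1 : ℚ) ^ (∑ j, t j) * ((n - ∑ j, Q j * t j).factorial : ℚ) := by
    intro S hS
    obtain ⟨h1, ⟨h2, h3⟩, h4⟩ := mem_placeSets.mp hS
    have hcard : S.card = ∑ j, t j := by
      rw [← typeOf_sum S]
      exact Finset.sum_congr rfl fun j _ => congrFun h4 j
    have hpred : (Finset.univ.filter fun π : Equiv.Perm (Fin n) =>
          ∀ p ∈ S, isAdjCycle (Q p.1) π p.2)
        = (Finset.univ.filter fun π : Equiv.Perm (Fin n) =>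
          (∀ p ∈ S, isAdjCycle (Q p.1) π p.2) ∧ ∀ i ∈ (∅ : Finset (Fin n)), π i = i) := by
      apply Finset.filter_congr
      intro π _
      simp
    have hsum : ∑ p ∈ S, Q p.1 = ∑ j, Q j * t j := by
      rw [← typeOf_sum_mul Q S Q]
      exact Finset.sum_congr rfl fun j _ => by rw [congrFun h4 j]
    rw [hpred, card_constrained Q hQ1 n S ∅ h2 h3 (by simp), hcard]
    rw [Finset.card_empty, Nat.zero_add, hsum]
  rw [Finset.sum_congr rfl hterm, Finset.sum_const, nsmul_eq_mul]
  -- final rational arithmetic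
  have hnat := placeSets_card_mul hQ1 n t htsig
  have hQnat : ((placeSets Q n t).card : ℚ)
      * ((∏ j, (t j).factorial : ℕ) * ((n - ∑ j, Q j * t j).factorial : ℕ))
      = ((n - ∑ j, (Q j - 1) * t j).factorial : ℕ) := by
    exact_mod_cast congrArg (fun z : ℕ => (z : ℚ)) hnat
  have hprodne : ((∏ j, (t j).factorial : ℕ) : ℚ) ≠ 0 := by
    exact_mod_cast (Finset.prod_pos fun j _ => Nat.factorial_pos (t j)).ne'
  rw [eq_div_iff hprodne, ← hQnat]
  ring
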